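/- Let σ ≥ 1 be a real number and let v : ℝ → ℂ be differentiable at a point x. Then the function y ↦ |v(y)|^{2σ} v(y) is differentiable at x, its derivative D at x equals |v(x)|^{2σ} v'(x) + 2σ |v(x)|^{2σ−2} Re( conj(v(x)) · v'(x) ) · v(x) (understood as |v(x)|^{2σ} v'(x) when v(x) = 0), and Re( D · conj(v'(x)) ) = |v(x)|^{2σ} |v'(x)|² + 2σ |v(x)|^{2σ−2} ( Re( conj(v(x)) · v'(x) ) )² ≥ 0. -/

import Mathlib

lemma normSq_rpow_eq_abs (z : ℂ) (t : ℝ) :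
    Complex.normSq z ^ t = ‖z‖ ^ (2 * t) := by
  rw [← Complex.sq_norm, ← Real.rpow_natCast (‖z‖) 2,
    ← Real.rpow_mul (norm_nonneg z)]
  norm_num

/-- Pointwise differentiation identity and sign condition for the nonlinearity
`f(v) = |v|^{2σ}v` (underlying property Re(f(v), Av) ≥ 0 with A = −Δ): if `σ ≥ 1` and
`v : ℝ → ℂ` is differentiable at `x`, then `y ↦ |v(y)|^{2σ} v(y)` is differentiable at `x`
with derivative `D = |v(x)|^{2σ} v'(x) + 2σ |v(x)|^{2σ−2} Re(conj(v(x)) v'(x)) v(x)`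
(which equals `|v(x)|^{2σ} v'(x)` when `v(x) = 0`, since the second summand carries the
factor `v(x)`), and
`Re(D conj(v'(x))) = |v(x)|^{2σ} |v'(x)|² + 2σ |v(x)|^{2σ−2} (Re(conj(v(x)) v'(x)))² ≥ 0`. -/
theorem stmt_6 (σ : ℝ) (hσ : 1 ≤ σ) (v : ℝ → ℂ) (x : ℝ)
    (hv : DifferentiableAt ℝ v x) :
    HasDerivAt (fun y => ((‖v y‖ ^ (2 * σ) : ℝ) : ℂ) * v y)
      (((‖v x‖ ^ (2 * σ) : ℝ) : ℂ) * deriv v x +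
        ((2 * σ * ‖v x‖ ^ (2 * σ - 2) *
            ((starRingEnd ℂ) (v x) * deriv v x).re : ℝ) : ℂ) * v x) x ∧
    ((((‖v x‖ ^ (2 * σ) : ℝ) : ℂ) * deriv v x +
        ((2 * σ * ‖v x‖ ^ (2 * σ - 2) *
            ((starRingEnd ℂ) (v x) * deriv v x).re : ℝ) : ℂ) * v x) *
          (starRingEnd ℂ) (deriv v x)).re =
      ‖v x‖ ^ (2 * σ) * ‖deriv v x‖ ^ 2 +
        2 * σ * ‖v x‖ ^ (2 * σ - 2) *
          ((starRingEnd ℂ) (v x) * deriv v x).re ^ 2 ∧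
    0 ≤ ((((‖v x‖ ^ (2 * σ) : ℝ) : ℂ) * deriv v x +
        ((2 * σ * ‖v x‖ ^ (2 * σ - 2) *
            ((starRingEnd ℂ) (v x) * deriv v x).re : ℝ) : ℂ) * v x) *
          (starRingEnd ℂ) (deriv v x)).re := by
  have hd := hv.hasDerivAt
  -- derivative of normSq ∘ v
  have hre : HasDerivAt (fun y => (v y).re) ((deriv v x).re) x :=
    Complex.reCLM.hasFDerivAt.comp_hasDerivAt x hd
  have him : HasDerivAt (fun y => (v y).im) ((deriv v x).im) x :=
    Complex.imCLM.hasFDerivAt.comp_hasDerivAt x hd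
  have hu : HasDerivAt (fun y => Complex.normSq (v y))
      (2 * ((starRingEnd ℂ) (v x) * deriv v x).re) x := by
    have h : HasDerivAt (fun y => (v y).re * (v y).re + (v y).im * (v y).im)
        ((deriv v x).re * (v x).re + (v x).re * (deriv v x).re +
          ((deriv v x).im * (v x).im + (v x).im * (deriv v x).im)) x :=
      (hre.mul hre).add (him.mul him)
    convert h using 1
    · funext y; exact Complex.normSq_apply _
    simp [Complex.mul_re]; ring
  -- derivative of (normSq ∘ v) ^ σ
  have hr : HasDerivAt (fun y => Complex.normSq (v y) ^ σ)
      (σ * Complex.normSq (v x) ^ (σ - 1) *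
        (2 * ((starRingEnd ℂ) (v x) * deriv v x).re)) x :=
    (Real.hasDerivAt_rpow_const (Or.inr hσ)).comp x hu
  have hD := hr.ofReal_comp.mul hd
  have hfun : (fun y => ((‖v y‖ ^ (2 * σ) : ℝ) : ℂ) * v y)
      = fun y => ((Complex.normSq (v y) ^ σ : ℝ) : ℂ) * v y := by
    funext y
    rw [normSq_rpow_eq_abs]
  have hval : ((‖v x‖ ^ (2 * σ) : ℝ) : ℂ) * deriv v x +
        ((2 * σ * ‖v x‖ ^ (2 * σ - 2) *
            ((starRingEnd ℂ) (v x) * deriv v x).re : ℝ) : ℂ) * v x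
      = ((σ * Complex.normSq (v x) ^ (σ - 1) *
          (2 * ((starRingEnd ℂ) (v x) * deriv v x).re) : ℝ) : ℂ) * v x +
        ((Complex.normSq (v x) ^ σ : ℝ) : ℂ) * deriv v x := by
    rw [normSq_rpow_eq_abs, normSq_rpow_eq_abs]
    have : 2 * (σ - 1) = 2 * σ - 2 := by ring
    rw [this]
    push_cast
    ring
  have h1 : HasDerivAt (fun y => ((‖v y‖ ^ (2 * σ) : ℝ) : ℂ) * v y)
      (((‖v x‖ ^ (2 * σ) : ℝ) : ℂ) * deriv v x +
        ((2 * σ * ‖v x‖ ^ (2 * σ - 2) *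
            ((starRingEnd ℂ) (v x) * deriv v x).re : ℝ) : ℂ) * v x) x := by
    rw [hfun, hval]; exact hD
  have h2 : ((((‖v x‖ ^ (2 * σ) : ℝ) : ℂ) * deriv v x +
        ((2 * σ * ‖v x‖ ^ (2 * σ - 2) *
            ((starRingEnd ℂ) (v x) * deriv v x).re : ℝ) : ℂ) * v x) *
          (starRingEnd ℂ) (deriv v x)).re =
      ‖v x‖ ^ (2 * σ) * ‖deriv v x‖ ^ 2 +
        2 * σ * ‖v x‖ ^ (2 * σ - 2) *
          ((starRingEnd ℂ) (v x) * deriv v x).re ^ 2 := by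
    rw [show ‖deriv v x‖ ^ 2 = Complex.normSq (deriv v x) from Complex.sq_norm _,
      Complex.normSq_apply]
    simp [Complex.add_re, Complex.mul_re, Complex.conj_re, Complex.conj_im]
    ring
  refine ⟨h1, h2, ?_⟩
  rw [h2]
  have hσ0 : (0:ℝ) ≤ σ := le_trans zero_le_one hσ
  have t1 : (0:ℝ) ≤ ‖v x‖ ^ (2 * σ) * ‖deriv v x‖ ^ 2 := by
    positivity
  have t2 : (0:ℝ) ≤ 2 * σ * ‖v x‖ ^ (2 * σ - 2) *
      ((starRingEnd ℂ) (v x) * deriv v x).re ^ 2 := by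
    have := Real.rpow_nonneg (norm_nonneg (v x)) (2 * σ - 2)
    positivity
  linarith
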